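/- Let T be a tree of height ω₁, each of whose levels has at most ω₁ nodes, with exactly λ branches of length ω₁, where ω₁ < λ < 2^{ω₁}. Then there is a first-order structure M (in a possibly infinite relational vocabulary) of cardinality ω₁ whose automorphism group has cardinality exactly λ. -/

import Mathlib

open Cardinal FirstOrder

noncomputable section

/-- ω₁ as an ordinal. -/
abbrev om1 : Ordinal := (Cardinal.aleph 1).ord

/-- The countable ordinals, as a linearly ordered type. -/
abbrev O1 : Type 1 := {o : Ordinal // o < om1}

namespace ShelahAut
universe u v


open scoped symmDiff Classical
set_option linter.unusedSectionVars false

variable {T : Type} [PartialOrder T]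

/-- The type of uncountable branches. -/
abbrev Branch (lvl : T → Ordinal) : Type 1 :=
  {b : O1 → T // StrictMono b ∧ ∀ α : O1, lvl (b α) = (α : Ordinal)}

/-- `t` lies on an uncountable branch. -/
def OnB (lvl : T → Ordinal) (t : T) : Prop := ∃ (b : Branch lvl) (α : O1), b.1 α = t

section Tree
variable (lvl : T → Ordinal)

variable (hmono : StrictMono lvl)
  (htree : ∀ x y z : T, x < z → y < z → x ≤ y ∨ y ≤ x)

include hmono htree

/-- uniqueness of predecessors at a given level -/
theorem pred_unique {u u' t : T} (hu : u < t) (hu' : u' < t)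
    (hl : lvl u = lvl u') : u = u' := by
  rcases htree u u' t hu hu' with h | h
  · rcases lt_or_eq_of_le h with h' | h'
    · exact absurd (hmono h') (by rw [hl]; exact lt_irrefl _)
    · exact h'
  · rcases lt_or_eq_of_le h with h' | h'
    · exact absurd (hmono h') (by rw [hl]; exact lt_irrefl _)
    · exact h'.symm

/-- The predecessor of `t` at level `β`, if it exists (junk value `t` otherwise). -/
def predAt (lvl : T → Ordinal) (β : Ordinal) (t : T) : T :=
  if h : ∃ u, u < t ∧ lvl u = β then h.choose else t

omit hmono htree in theorem predAt_spec {β : Ordinal} {t : T} (h : ∃ u, u < t ∧ lvl u = β) :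
    predAt lvl β t < t ∧ lvl (predAt lvl β t) = β := by
  rw [predAt, dif_pos h]; exact h.choose_spec

theorem predAt_eq {β : Ordinal} {u t : T} (hu : u < t) (hl : lvl u = β) :
    predAt lvl β t = u := by
  have h : ∃ u, u < t ∧ lvl u = β := ⟨u, hu, hl⟩
  obtain ⟨h1, h2⟩ := predAt_spec lvl h
  exact pred_unique lvl hmono htree h1 hu (by rw [h2, hl])

/-- The image of a finite set under "predecessor at level β", with mod-2 multiplicities. -/
def Qset (lvl : T → Ordinal) (β : Ordinal) (s : Finset T) : Finset T :=
  (s.image (predAt lvl β)).filter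
    (fun u => lvl u = β ∧ Odd ((s.filter (fun v => u < v)).card))

theorem mem_Qset {β : Ordinal} {s : Finset T} {u : T} :
    u ∈ Qset lvl β s ↔ lvl u = β ∧ Odd ((s.filter (fun v => u < v)).card) := by
  constructor
  · intro hu
    exact (Finset.mem_filter.1 hu).2
  · rintro ⟨h1, h2⟩
    refine Finset.mem_filter.2 ⟨?_, h1, h2⟩
    have hpos : 0 < (s.filter (fun v => u < v)).card := by
      rcases h2 with ⟨k, hk⟩; omega
    obtain ⟨v, hv⟩ := Finset.card_pos.1 hpos
    obtain ⟨hvs, huv⟩ := Finset.mem_filter.1 hv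
    exact Finset.mem_image.2 ⟨v, hvs, predAt_eq lvl hmono htree huv h1⟩

omit hmono htree in theorem Qset_empty {β : Ordinal} : Qset lvl β (∅ : Finset T) = ∅ := by
  simp [Qset]

omit hmono htree in theorem Qset_card_le {β : Ordinal} {s : Finset T} : (Qset lvl β s).card ≤ s.card :=
  le_trans (Finset.card_filter_le _ _) (Finset.card_image_le)

omit hmono htree in theorem filter_symmDiff' (p : T → Prop) [DecidablePred p] (s t : Finset T) :
    (s ∆ t).filter p = (s.filter p) ∆ (t.filter p) := by
  ext x
  simp only [Finset.mem_filter, Finset.mem_symmDiff]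
  tauto

omit hmono htree in theorem odd_card_symmDiff (s t : Finset T) :
    Odd ((s ∆ t).card) ↔ (Odd (s.card) ↔ ¬ Odd (t.card)) := by
  have h1 : s ∆ t = (s \ t) ∪ (t \ s) := by
    ext x; simp only [Finset.mem_symmDiff, Finset.mem_union, Finset.mem_sdiff]
  have hdisj : Disjoint (s \ t) (t \ s) := by
    refine Finset.disjoint_left.2 ?_
    intro a ha hb
    exact (Finset.mem_sdiff.1 hb).2 (Finset.mem_sdiff.1 ha).1
  have h2 : (s ∆ t).card = (s \ t).card + (t \ s).card := by
    rw [h1, Finset.card_union_of_disjoint hdisj]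
  have h3 : (s \ t).card + (s ∩ t).card = s.card := by
    rw [Finset.card_sdiff_add_card_inter]
  have h4 : (t \ s).card + (t ∩ s).card = t.card := by
    rw [Finset.card_sdiff_add_card_inter]
  have h5 : (s ∩ t).card = (t ∩ s).card := by rw [Finset.inter_comm]
  rw [Nat.odd_iff, Nat.odd_iff, Nat.odd_iff]
  omega

theorem Qset_symmDiff {β : Ordinal} (s t : Finset T) :
    Qset lvl β (s ∆ t) = (Qset lvl β s) ∆ (Qset lvl β t) := by
  ext u
  rw [Finset.mem_symmDiff, mem_Qset lvl hmono htree, mem_Qset lvl hmono htree,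
    mem_Qset lvl hmono htree, filter_symmDiff', odd_card_symmDiff]
  by_cases h : lvl u = β
  · simp only [h, true_and]; tauto
  · simp only [h, false_and, and_false]; tauto

end Tree


section Model

variable {lvl : T → Ordinal}

variable (lvl) in
/-- representatives of model elements: a node (giving the level) and a finite set of
nodes of the same level, everything lying on branches -/
def Pre : Type := {p : T × Finset T // OnB lvl p.1 ∧ ∀ u ∈ p.2, OnB lvl u ∧ lvl u = lvl p.1}

variable (lvl) in
def preSetoid : Setoid (Pre lvl) :=
  ⟨fun p q => lvl p.1.1 = lvl q.1.1 ∧ p.1.2 = q.1.2,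
    ⟨fun _ => ⟨rfl, rfl⟩, fun h => ⟨h.1.symm, h.2.symm⟩,
      fun h h' => ⟨h.1.trans h'.1, h.2.trans h'.2⟩⟩⟩

variable (lvl) in
/-- The universe of the model. -/
def Mdl : Type := Quotient (preSetoid lvl)

def Mlvl : Mdl lvl → Ordinal := Quotient.lift (fun p => lvl p.1.1) (fun _ _ h => h.1)
def Mval : Mdl lvl → Finset T := Quotient.lift (fun p => p.1.2) (fun _ _ h => h.2)

theorem Mdl.ext {x y : Mdl lvl} (h1 : Mlvl x = Mlvl y) (h2 : Mval x = Mval y) : x = y := by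
  induction x using Quotient.inductionOn
  induction y using Quotient.inductionOn
  exact Quotient.sound ⟨h1, h2⟩

variable (lvl) in
def elem (t : T) (s : Finset T) (h1 : OnB lvl t)
    (h2 : ∀ u ∈ s, OnB lvl u ∧ lvl u = lvl t) : Mdl lvl :=
  Quotient.mk _ ⟨(t, s), h1, h2⟩

@[simp] theorem Mlvl_elem {t s h1 h2} : Mlvl (elem lvl t s h1 h2) = lvl t := rfl
@[simp] theorem Mval_elem {t s h1 h2} : Mval (elem lvl t s h1 h2) = s := rfl

theorem Mdl.cases (x : Mdl lvl) : ∃ t s h1 h2, x = elem lvl t s h1 h2 := by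
  induction x using Quotient.inductionOn with
  | h p => exact ⟨p.1.1, p.1.2, p.2.1, p.2.2, rfl⟩

theorem Mval_mem {x : Mdl lvl} {u : T} (hu : u ∈ Mval x) : OnB lvl u ∧ lvl u = Mlvl x := by
  induction x using Quotient.inductionOn with
  | h p => exact p.2.2 u hu

/-- index type for the binary relations -/
def RelIx (T : Type) : Type := T ⊕ (T × T)

/-- the (relational) language -/
def Lang (T : Type) : FirstOrder.Language.{u, v} :=
  ⟨fun _ => (PEmpty : Type u), fun n => match n with | 2 => ULift.{v} (RelIx T) | _ => (PEmpty : Type v)⟩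

instance : (Lang.{u, v} T).IsRelational := fun _ => inferInstanceAs (IsEmpty PEmpty)

variable (lvl) in
/-- interpretation of the binary relation symbols -/
def rinterp (r : RelIx T) (x y : Mdl lvl) : Prop :=
  match r with
  | Sum.inl t => Mlvl x = lvl t ∧ Mlvl y = lvl t ∧ Mval y = Mval x ∆ ({t} : Finset T)
  | Sum.inr (u, v) => lvl u < lvl v ∧ Mlvl x = lvl v ∧ Mlvl y = lvl u ∧
      Mval y = Qset lvl (lvl u) (Mval x)

variable (lvl) in
instance MdlStructure : (Lang.{u, v} T).Structure (Mdl lvl) where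
  funMap := fun {n} f _ => PEmpty.elim f
  RelMap := fun {n} => match n with
    | 2 => fun r v => rinterp lvl r.down (v 0) (v 1)
    | 0 => fun r _ => PEmpty.elim r
    | 1 => fun r _ => PEmpty.elim r
    | (_+3) => fun r _ => PEmpty.elim r

theorem auto_rel (g : Mdl lvl ≃[Lang.{u, v} T] Mdl lvl) (r : RelIx T) (x y : Mdl lvl) :
    rinterp lvl r (g x) (g y) ↔ rinterp lvl r x y := by
  have h := g.map_rel' (n := 2) (ULift.up r) ![x, y]
  have e0 : (g.toFun ∘ ![x, y]) = ![g x, g y] := by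
    funext i; fin_cases i <;> rfl
  rw [e0] at h
  exact h


end Model

section CohPart
variable {lvl : T → Ordinal}


section Coherent

/-- Coherent sequences of finite level sets. -/
def IsCoh (lvl : T → Ordinal) (τ : O1 → Finset T) : Prop :=
  (∀ α : O1, ∀ u ∈ τ α, OnB lvl u ∧ lvl u = (α : Ordinal)) ∧
  ∀ β α : O1, β < α → τ β = Qset lvl (β : Ordinal) (τ α)

variable (lvl) in
def Coh : Type 1 := {τ : O1 → Finset T // IsCoh lvl τ}

variable (hmono : StrictMono lvl)
  (htree : ∀ x y z : T, x < z → y < z → x ≤ y ∨ y ≤ x)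
  (hheight : ∀ t, lvl t < om1)

/-- translation of the model by a coherent sequence -/
def trFun (τ : O1 → Finset T) (hτ : IsCoh lvl τ) : Mdl lvl → Mdl lvl :=
  Quotient.map
    (fun p => ⟨(p.1.1, p.1.2 ∆ τ ⟨lvl p.1.1, hheight p.1.1⟩), p.2.1, by
      intro u hu
      rcases Finset.mem_symmDiff.1 hu with ⟨h, _⟩ | ⟨h, _⟩
      · exact p.2.2 u h
      · exact (hτ.1 _ u h)⟩)
    (by
      rintro p q ⟨h1, h2⟩
      refine ⟨h1, ?_⟩
      show p.1.2 ∆ τ ⟨lvl p.1.1, _⟩ = q.1.2 ∆ τ ⟨lvl q.1.1, _⟩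
      have hc : (⟨lvl p.1.1, hheight p.1.1⟩ : O1) = ⟨lvl q.1.1, hheight q.1.1⟩ :=
        Subtype.ext h1
      rw [h2, hc])

theorem Mlvl_lt (hheight : ∀ t, lvl t < om1) (x : Mdl lvl) : Mlvl x < om1 := by
  induction x using Quotient.inductionOn with
  | h p => exact hheight p.1.1

theorem Mlvl_trFun (τ : O1 → Finset T) (hτ : IsCoh lvl τ) (x : Mdl lvl) :
    Mlvl (trFun hheight τ hτ x) = Mlvl x := by
  induction x using Quotient.inductionOn; rfl

theorem Mval_trFun (τ : O1 → Finset T) (hτ : IsCoh lvl τ) (x : Mdl lvl) (h : Mlvl x < om1) :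
    Mval (trFun hheight τ hτ x) = Mval x ∆ τ ⟨Mlvl x, h⟩ := by
  induction x using Quotient.inductionOn; rfl

theorem trFun_trFun (τ : O1 → Finset T) (hτ : IsCoh lvl τ) (x : Mdl lvl) :
    trFun hheight τ hτ (trFun hheight τ hτ x) = x := by
  induction x using Quotient.inductionOn with
  | h p =>
    refine Mdl.ext rfl ?_
    show (p.1.2 ∆ _) ∆ _ = p.1.2
    exact symmDiff_symmDiff_cancel_right _ _

/-- translation as an automorphism of the structure -/
def trEquiv (τ : O1 → Finset T) (hτ : IsCoh lvl τ) : Mdl lvl ≃[Lang.{u, v} T] Mdl lvl where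
  toEquiv := ⟨trFun hheight τ hτ, trFun hheight τ hτ,
    trFun_trFun hheight τ hτ, trFun_trFun hheight τ hτ⟩
  map_fun' := fun {n} f _ => PEmpty.elim f
  map_rel' := by
    intro n r v
    match n, r with
    | 0, r => exact PEmpty.elim r
    | 1, r => exact PEmpty.elim r
    | (n+3), r => exact PEmpty.elim r
    | 2, r =>
      show rinterp lvl r.down (trFun hheight τ hτ (v 0)) (trFun hheight τ hτ (v 1)) ↔
        rinterp lvl r.down (v 0) (v 1)
      set x := v 0
      set y := v 1
      have hlx : Mlvl x < om1 := Mlvl_lt hheight x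
      have hly : Mlvl y < om1 := Mlvl_lt hheight y
      match r.down with
      | Sum.inl t =>
        show (Mlvl _ = lvl t ∧ Mlvl _ = lvl t ∧ Mval _ = Mval _ ∆ _) ↔ _
        rw [Mlvl_trFun, Mlvl_trFun, Mval_trFun hheight τ hτ x hlx,
          Mval_trFun hheight τ hτ y hly]
        constructor
        · rintro ⟨e1, e2, e3⟩
          refine ⟨e1, e2, ?_⟩
          have hxy : Mlvl x = Mlvl y := e1.trans e2.symm
          have : (⟨Mlvl y, hly⟩ : O1) = ⟨Mlvl x, hlx⟩ := Subtype.ext hxy.symm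
          rw [this] at e3
          rw [symmDiff_right_comm] at e3
          exact symmDiff_left_injective _ e3
        · rintro ⟨e1, e2, e3⟩
          refine ⟨e1, e2, ?_⟩
          have hxy : Mlvl x = Mlvl y := e1.trans e2.symm
          have hco : (⟨Mlvl y, hly⟩ : O1) = ⟨Mlvl x, hlx⟩ := Subtype.ext hxy.symm
          rw [hco, e3, symmDiff_right_comm]
      | Sum.inr (u, w) =>
        show (lvl u < lvl w ∧ Mlvl _ = lvl w ∧ Mlvl _ = lvl u ∧
            Mval _ = Qset lvl (lvl u) (Mval _)) ↔ _
        rw [Mlvl_trFun, Mlvl_trFun, Mval_trFun hheight τ hτ x hlx,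
          Mval_trFun hheight τ hτ y hly]
        constructor
        · rintro ⟨e0, e1, e2, e3⟩
          refine ⟨e0, e1, e2, ?_⟩
          have hβ : (⟨Mlvl y, hly⟩ : O1) = ⟨lvl u, hheight u⟩ := Subtype.ext e2
          have hα : (⟨Mlvl x, hlx⟩ : O1) = ⟨lvl w, hheight w⟩ := Subtype.ext e1
          have hcoh : τ ⟨Mlvl y, hly⟩ = Qset lvl (lvl u) (τ ⟨Mlvl x, hlx⟩) := by
            rw [hβ, hα]
            exact hτ.2 ⟨lvl u, hheight u⟩ ⟨lvl w, hheight w⟩ (Subtype.mk_lt_mk.2 e0)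
          rw [Qset_symmDiff lvl hmono htree, ← hcoh] at e3
          exact symmDiff_left_injective _ e3
        · rintro ⟨e0, e1, e2, e3⟩
          refine ⟨e0, e1, e2, ?_⟩
          have hβ : (⟨Mlvl y, hly⟩ : O1) = ⟨lvl u, hheight u⟩ := Subtype.ext e2
          have hα : (⟨Mlvl x, hlx⟩ : O1) = ⟨lvl w, hheight w⟩ := Subtype.ext e1
          have hcoh : τ ⟨Mlvl y, hly⟩ = Qset lvl (lvl u) (τ ⟨Mlvl x, hlx⟩) := by
            rw [hβ, hα]
            exact hτ.2 ⟨lvl u, hheight u⟩ ⟨lvl w, hheight w⟩ (Subtype.mk_lt_mk.2 e0)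
          rw [Qset_symmDiff lvl hmono htree, ← hcoh, e3]

end Coherent

section Extract
variable (hmono : StrictMono lvl)
  (htree : ∀ x y z : T, x < z → y < z → x ≤ y ∨ y ≤ x)
  (hheight : ∀ t, lvl t < om1)

theorem symmDiff_singleton_notmem {a : T} {s : Finset T} (ha : a ∉ s) :
    s ∆ ({a} : Finset T) = insert a s := by
  ext x
  simp only [Finset.mem_symmDiff, Finset.mem_singleton, Finset.mem_insert]
  constructor
  · rintro (⟨h, _⟩ | ⟨rfl, _⟩)
    · exact Or.inr h
    · exact Or.inl rfl
  · rintro (rfl | h)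
    · exact Or.inr ⟨rfl, ha⟩
    · refine Or.inl ⟨h, fun hx => ha (hx ▸ h)⟩

def zeroM (b0 : Branch lvl) (α : O1) : Mdl lvl :=
  elem lvl (b0.1 α) ∅ ⟨b0, α, rfl⟩ (by simp)

theorem auto_lvl (g : Mdl lvl ≃[Lang.{u, v} T] Mdl lvl) (x : Mdl lvl) : Mlvl (g x) = Mlvl x := by
  obtain ⟨t, s, h1, h2, rfl⟩ := Mdl.cases x
  have hsd : ∀ u ∈ s ∆ ({t} : Finset T), OnB lvl u ∧ lvl u = lvl t := by
    intro u hu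
    rcases Finset.mem_symmDiff.1 hu with ⟨h, _⟩ | ⟨h, _⟩
    · exact h2 u h
    · obtain rfl := Finset.mem_singleton.1 h
      exact ⟨h1, rfl⟩
  have hrel : rinterp lvl (Sum.inl t) (elem lvl t s h1 h2) (elem lvl t (s ∆ {t}) h1 hsd) :=
    ⟨rfl, rfl, by simp⟩
  have h := (auto_rel g (Sum.inl t) _ _).2 hrel
  simpa using h.1

theorem auto_val (g : Mdl lvl ≃[Lang.{u, v} T] Mdl lvl) (t : T) (h1 : OnB lvl t) (s : Finset T) :
    ∀ (h2 : ∀ u ∈ s, OnB lvl u ∧ lvl u = lvl t),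
      Mval (g (elem lvl t s h1 h2)) =
        Mval (g (elem lvl t ∅ h1 (by simp))) ∆ s := by
  induction s using Finset.induction_on with
  | empty =>
    intro h2
    show _ = _ ∆ (⊥ : Finset T)
    rw [symmDiff_bot]
  | @insert a s' ha IH =>
    intro h2
    have h2' : ∀ u ∈ s', OnB lvl u ∧ lvl u = lvl t :=
      fun u hu => h2 u (Finset.mem_insert_of_mem hu)
    have hat := h2 a (Finset.mem_insert_self a s')
    have hrel : rinterp lvl (Sum.inl a) (elem lvl t s' h1 h2') (elem lvl t (insert a s') h1 h2) := by
      refine ⟨by simp [hat.2], by simp [hat.2], ?_⟩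
      simp [symmDiff_singleton_notmem ha]
    have h := (auto_rel g (Sum.inl a) _ _).2 hrel
    have h3 := h.2.2
    rw [h3, IH h2', symmDiff_assoc, symmDiff_singleton_notmem ha]

def tauOf (b0 : Branch lvl) (g : Mdl lvl ≃[Lang.{u, v} T] Mdl lvl) : O1 → Finset T :=
  fun α => Mval (g (zeroM b0 α))

theorem tauOf_isCoh (b0 : Branch lvl) (g : Mdl lvl ≃[Lang.{u, v} T] Mdl lvl) :
    IsCoh lvl (tauOf b0 g) := by
  constructor
  · intro α u hu
    obtain ⟨hOnB, hl⟩ := Mval_mem hu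
    refine ⟨hOnB, ?_⟩
    rw [hl, auto_lvl g]
    show Mlvl (elem lvl _ _ _ _) = _
    exact b0.2.2 α
  · intro β α hβα
    have hrel : rinterp lvl (Sum.inr (b0.1 β, b0.1 α)) (zeroM b0 α) (zeroM b0 β) := by
      refine ⟨?_, rfl, rfl, ?_⟩
      · rw [b0.2.2, b0.2.2]
        exact hβα
      · show (∅ : Finset T) = Qset lvl _ ∅
        rw [Qset_empty]
    have h := (auto_rel g _ _ _).2 hrel
    have h3 := h.2.2.2
    show tauOf b0 g β = Qset lvl _ (tauOf b0 g α)
    rw [← b0.2.2 β]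
    exact h3

theorem trEquiv_apply (τ : O1 → Finset T) (hτ : IsCoh lvl τ) (x : Mdl lvl) :
    trEquiv hmono htree hheight τ hτ x = trFun hheight τ hτ x := rfl

theorem auto_eq_tr (b0 : Branch lvl) (g : Mdl lvl ≃[Lang.{u, v} T] Mdl lvl) :
    g = trEquiv hmono htree hheight (tauOf b0 g) (tauOf_isCoh b0 g) := by
  refine Language.Equiv.ext fun x => ?_
  obtain ⟨t, s, h1, h2, rfl⟩ := Mdl.cases x
  refine Mdl.ext ?_ ?_
  · rw [auto_lvl g, trEquiv_apply, Mlvl_trFun]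
  · rw [trEquiv_apply, Mval_trFun hheight _ _ _ (Mlvl_lt hheight _)]
    rw [auto_val g t h1 s h2]
    have hz : zeroM b0 ⟨Mlvl (elem lvl t s h1 h2), Mlvl_lt hheight _⟩ =
        elem lvl t ∅ h1 (by simp) := by
      refine Mdl.ext ?_ rfl
      show lvl (b0.1 _) = lvl t
      rw [b0.2.2]
      rfl
    show Mval (g (elem lvl t ∅ h1 (by simp))) ∆ s =
      s ∆ Mval (g (zeroM b0 ⟨Mlvl (elem lvl t s h1 h2), Mlvl_lt hheight _⟩))
    rw [hz, symmDiff_comm]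

def autEquivCoh (b0 : Branch lvl) : (Mdl lvl ≃[Lang.{u, v} T] Mdl lvl) ≃ Coh lvl where
  toFun g := ⟨tauOf b0 g, tauOf_isCoh b0 g⟩
  invFun τ := trEquiv hmono htree hheight τ.1 τ.2
  left_inv g := (auto_eq_tr hmono htree hheight b0 g).symm
  right_inv τ := by
    apply Subtype.ext
    funext α
    show Mval (trEquiv.{u, v} hmono htree hheight τ.1 τ.2 (zeroM b0 α)) = τ.1 α
    rw [trEquiv_apply, Mval_trFun hheight _ _ _ (Mlvl_lt hheight _)]
    have hc : (⟨Mlvl (zeroM b0 α), Mlvl_lt hheight _⟩ : O1) = α := by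
      apply Subtype.ext
      exact b0.2.2 α
    rw [hc]
    show (⊥ : Finset T) ∆ τ.1 α = τ.1 α
    rw [bot_symmDiff]

end Extract


end CohPart

section Combinatorics
variable {lvl : T → Ordinal}
variable (hmono : StrictMono lvl)
  (htree : ∀ x y z : T, x < z → y < z → x ≤ y ∨ y ≤ x)
  (hheight : ∀ t, lvl t < om1)

/-- A node on a branch has predecessors at all smaller levels. -/
theorem onb_pred {t : T} (ht : OnB lvl t) {β : Ordinal} (hβ : β < lvl t) (hβ1 : β < om1) :
    ∃ u, u < t ∧ lvl u = β := by
  obtain ⟨b, ρ, rfl⟩ := ht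
  have hρ : (⟨β, hβ1⟩ : O1) < ρ := by
    have := b.2.2 ρ
    exact Subtype.mk_lt_mk.2 (by rw [← this]; exact hβ)
  exact ⟨b.1 ⟨β, hβ1⟩, b.2.1 hρ, b.2.2 _⟩

include hmono htree in
theorem Qset_singleton (b : Branch lvl) {β α : O1} (hβα : β < α) :
    Qset lvl (β : Ordinal) ({b.1 α} : Finset T) = {b.1 β} := by
  have hlt : b.1 β < b.1 α := b.2.1 hβα
  ext u
  rw [mem_Qset lvl hmono htree, Finset.mem_singleton]
  constructor
  · rintro ⟨h1, h2⟩
    have hpos : 0 < (({b.1 α} : Finset T).filter (fun v => u < v)).card := by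
      rcases h2 with ⟨k, hk⟩; omega
    obtain ⟨v, hv⟩ := Finset.card_pos.1 hpos
    obtain ⟨hv1, hv2⟩ := Finset.mem_filter.1 hv
    obtain rfl := Finset.mem_singleton.1 hv1
    exact pred_unique lvl hmono htree hv2 hlt (by rw [h1, b.2.2])
  · rintro rfl
    refine ⟨b.2.2 β, ?_⟩
    have : (({b.1 α} : Finset T).filter (fun v => b.1 β < v)) = {b.1 α} := by
      rw [Finset.filter_singleton, if_pos hlt]
    rw [this, Finset.card_singleton]
    exact odd_one

include hmono htree in
theorem branch_coh (b : Branch lvl) : IsCoh lvl (fun α => ({b.1 α} : Finset T)) := by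
  constructor
  · intro α u hu
    obtain rfl := Finset.mem_singleton.1 hu
    exact ⟨⟨b, α, rfl⟩, b.2.2 α⟩
  · intro β α hβα
    exact (Qset_singleton hmono htree b hβα).symm

include hmono htree in
theorem card_mono (τ : Coh lvl) {β α : O1} (h : β ≤ α) :
    (τ.1 β).card ≤ (τ.1 α).card := by
  rcases lt_or_eq_of_le h with h' | h'
  · rw [τ.2.2 β α h']
    exact Qset_card_le lvl
  · rw [h']

include hmono htree in
/-- every coherent sequence has levels of bounded size -/
theorem coh_bounded (τ : Coh lvl) : ∃ N : ℕ, ∀ α : O1, (τ.1 α).card ≤ N := by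
  by_contra hN
  push_neg at hN
  choose f hf using hN
  set o : Ordinal := ⨆ n : ℕ, ((f n) : Ordinal) with ho
  have hlt : o < om1 := by
    apply Ordinal.iSup_lt_ord
    · rw [Cardinal.isRegular_aleph_one.cof_eq]
      exact (Cardinal.mk_nat ▸ Cardinal.aleph0_lt_aleph_one)
    · exact fun n => (f n).2
  have hle : ∀ n : ℕ, f n ≤ (⟨o, hlt⟩ : O1) := by
    intro n
    exact Subtype.coe_le_coe.1 (Ordinal.le_iSup (fun n : ℕ => ((f n) : Ordinal)) n)
  have hcard : ∀ n : ℕ, n < (τ.1 ⟨o, hlt⟩).card := by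
    intro n
    exact lt_of_lt_of_le (hf n) (card_mono hmono htree τ (hle n))
  exact lt_irrefl _ (hcard ((τ.1 ⟨o, hlt⟩).card))

include hmono htree in
/-- the plateau: a level `α₀` from which on all levels of `τ` have the same size -/
theorem coh_plateau (τ : Coh lvl) : ∃ α₀ : O1, ∀ α : O1, α₀ ≤ α →
    (τ.1 α).card = (τ.1 α₀).card := by
  obtain ⟨N, hN⟩ := coh_bounded hmono htree τ
  have h0 : (0 : Ordinal) < om1 := by
    rw [Cardinal.lt_ord]
    simpa using Cardinal.aleph0_lt_aleph_one.trans_le' (by simp)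
  set S : Set ℕ := {n | ∃ α : O1, (τ.1 α).card = n} with hS
  have hSne : S.Nonempty := ⟨(τ.1 ⟨0, h0⟩).card, ⟨0, h0⟩, rfl⟩
  have hSbdd : BddAbove S := by
    refine ⟨N, ?_⟩
    rintro n ⟨α, rfl⟩
    exact hN α
  obtain ⟨α₀, hα₀⟩ := Nat.sSup_mem hSne hSbdd
  refine ⟨α₀, fun α hle => ?_⟩
  refine le_antisymm ?_ ?_
  · rw [hα₀]
    exact le_csSup hSbdd ⟨α, rfl⟩
  · exact card_mono hmono htree τ hle

section Counting
variable (τ : Coh lvl) {β α : O1} (hβα : β < α)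
  (hcard : (τ.1 β).card = (τ.1 α).card)

include hmono htree hβα hcard in
theorem claimA :
    (∀ v ∈ τ.1 α, ∃ u, u < v ∧ lvl u = (β : Ordinal)) ∧
    (∀ v ∈ τ.1 α, predAt lvl (β : Ordinal) v ∈ τ.1 β) ∧
    (Set.InjOn (predAt lvl (β : Ordinal)) (τ.1 α)) ∧
    (∀ u ∈ τ.1 β, ∃ v ∈ τ.1 α, predAt lvl (β : Ordinal) v = u) := by
  classical
  set sα := τ.1 α with hsα
  set sβ := τ.1 β with hsβ
  have hco : sβ = Qset lvl (β : Ordinal) sα := τ.2.2 β α hβα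
  set D : Finset T := sα.filter (fun v => ∃ u, u < v ∧ lvl u = (β : Ordinal)) with hD
  have hsub : sβ ⊆ D.image (predAt lvl (β : Ordinal)) := by
    intro u hu
    rw [hco, mem_Qset lvl hmono htree] at hu
    obtain ⟨h1, h2⟩ := hu
    have hpos : 0 < (sα.filter (fun v => u < v)).card := by
      rcases h2 with ⟨k, hk⟩; omega
    obtain ⟨v, hv⟩ := Finset.card_pos.1 hpos
    obtain ⟨hv1, hv2⟩ := Finset.mem_filter.1 hv
    refine Finset.mem_image.2 ⟨v, Finset.mem_filter.2 ⟨hv1, u, hv2, h1⟩, ?_⟩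
    exact predAt_eq lvl hmono htree hv2 h1
  have hc1 : sβ.card ≤ (D.image (predAt lvl (β : Ordinal))).card := Finset.card_le_card hsub
  have hc2 : (D.image (predAt lvl (β : Ordinal))).card ≤ D.card := Finset.card_image_le
  have hc3 : D.card ≤ sα.card := Finset.card_filter_le _ _
  have hDcard : D.card = sα.card := le_antisymm hc3 (by omega)
  have hDeq : D = sα := Finset.eq_of_subset_of_card_le (Finset.filter_subset _ _) (by omega)
  have himgcard : (D.image (predAt lvl (β : Ordinal))).card = D.card := le_antisymm
    Finset.card_image_le (by omega)
  have hinj : Set.InjOn (predAt lvl (β : Ordinal)) D := Finset.card_image_iff.1 himgcard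
  have himg : sβ = D.image (predAt lvl (β : Ordinal)) :=
    Finset.eq_of_subset_of_card_le hsub (by omega)
  refine ⟨?_, ?_, ?_, ?_⟩
  · intro v hv
    rw [← hDeq] at hv
    exact (Finset.mem_filter.1 hv).2
  · intro v hv
    rw [himg]
    exact Finset.mem_image.2 ⟨v, hDeq ▸ hv, rfl⟩
  · rw [← hDeq]; exact hinj
  · intro u hu
    rw [himg] at hu
    obtain ⟨v, hv, he⟩ := Finset.mem_image.1 hu
    exact ⟨v, hDeq ▸ hv, he⟩

end Counting
end Combinatorics

section Decompose
variable {lvl : T → Ordinal}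
variable (hmono : StrictMono lvl)
  (htree : ∀ x y z : T, x < z → y < z → x ≤ y ∨ y ≤ x)

/-- the unique element of `τ α` whose predecessor at level `α₀` is `t` -/
def cfun (τ : Coh lvl) (α₀ : O1) (t : T) (α : O1) : T :=
  if h : ∃ v, v ∈ τ.1 α ∧ predAt lvl (α₀ : Ordinal) v = t then h.choose else t

section WithPlateau
variable (τ : Coh lvl) (α₀ : O1)
  (hplat : ∀ α : O1, α₀ ≤ α → (τ.1 α).card = (τ.1 α₀).card)

include hplat in
theorem hcard_pair {β α : O1} (hβ : α₀ ≤ β) (hα : α₀ ≤ α) :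
    (τ.1 β).card = (τ.1 α).card := by
  rw [hplat β hβ, hplat α hα]

include hmono htree hplat in
theorem cfun_spec {t : T} (ht : t ∈ τ.1 α₀) {α : O1} (hα : α₀ < α) :
    cfun τ α₀ t α ∈ τ.1 α ∧ predAt lvl (α₀ : Ordinal) (cfun τ α₀ t α) = t := by
  obtain ⟨-, -, -, hsurj⟩ :=
    claimA hmono htree τ hα (hplat α (le_of_lt hα)).symm
  obtain ⟨v, hv, hvp⟩ := hsurj t ht
  have h : ∃ v, v ∈ τ.1 α ∧ predAt lvl (α₀ : Ordinal) v = t := ⟨v, hv, hvp⟩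
  rw [cfun, dif_pos h]
  exact h.choose_spec

include hmono htree hplat in
theorem cfun_eq {t : T} (ht : t ∈ τ.1 α₀) {α : O1} (hα : α₀ < α)
    {v : T} (hv : v ∈ τ.1 α) (hvp : predAt lvl (α₀ : Ordinal) v = t) :
    cfun τ α₀ t α = v := by
  obtain ⟨-, -, hinj, -⟩ :=
    claimA hmono htree τ hα (hplat α (le_of_lt hα)).symm
  obtain ⟨hc1, hc2⟩ := cfun_spec hmono htree τ α₀ hplat ht hα
  exact hinj hc1 hv (by rw [hc2, hvp])

include hmono htree hplat in
theorem cfun_chain {t : T} (ht : t ∈ τ.1 α₀) {β β' : O1} (hβ : α₀ < β) (hβ' : β < β') :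
    predAt lvl (β : Ordinal) (cfun τ α₀ t β') = cfun τ α₀ t β ∧
    cfun τ α₀ t β' ∈ τ.1 β' ∧ cfun τ α₀ t β ∈ τ.1 β := by
  have hβ'0 : α₀ < β' := lt_trans hβ hβ'
  obtain ⟨hv', hp'⟩ := cfun_spec hmono htree τ α₀ hplat ht hβ'0
  obtain ⟨hex, hmem, -, -⟩ :=
    claimA hmono htree τ hβ' (hcard_pair τ α₀ hplat (le_of_lt hβ) (le_of_lt hβ'0))
  -- v := the predecessor of cfun t β' at level β
  set v := predAt lvl (β : Ordinal) (cfun τ α₀ t β') with hvdef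
  have hvβ : v ∈ τ.1 β := hmem _ hv'
  have hvlt : v < cfun τ α₀ t β' ∧ lvl v = (β : Ordinal) :=
    predAt_spec lvl (hex _ hv')
  -- predAt α₀ v = t
  obtain ⟨hex0, -, -, -⟩ :=
    claimA hmono htree τ hβ (hplat β (le_of_lt hβ)).symm
  have hu : predAt lvl (α₀ : Ordinal) v < v ∧ lvl (predAt lvl (α₀ : Ordinal) v) = (α₀ : Ordinal) :=
    predAt_spec lvl (hex0 v hvβ)
  have huv' : predAt lvl (α₀ : Ordinal) v < cfun τ α₀ t β' := lt_trans hu.1 hvlt.1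
  have hteq : predAt lvl (α₀ : Ordinal) v = t := by
    have h1 : predAt lvl (α₀ : Ordinal) (cfun τ α₀ t β') = predAt lvl (α₀ : Ordinal) v :=
      predAt_eq lvl hmono htree huv' hu.2
    rw [← h1, hp']
  have : cfun τ α₀ t β = v := cfun_eq hmono htree τ α₀ hplat ht hβ hvβ hteq
  exact ⟨this.symm, hv', this ▸ hvβ⟩

/-- branch functions extracted from the coherent family above the plateau level -/
def bFun (τ : Coh lvl) (α₀ : O1) (t : T) (β : O1) : T :=
  if α₀ < β then cfun τ α₀ t β else if β < α₀ then predAt lvl (β : Ordinal) t else t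

theorem bFun_self : bFun τ α₀ t α₀ = t := by
  rw [bFun, if_neg (lt_irrefl α₀), if_neg (lt_irrefl α₀)]

include hmono htree hplat in
theorem bFun_mem {t : T} (ht : t ∈ τ.1 α₀) {β : O1} (hβ : α₀ ≤ β) :
    bFun τ α₀ t β ∈ τ.1 β := by
  rcases lt_or_eq_of_le hβ with h | h
  · rw [bFun, if_pos h]
    exact (cfun_spec hmono htree τ α₀ hplat ht h).1
  · rw [← h, bFun_self]
    exact ht

include hmono htree hplat in
theorem bFun_lvl {t : T} (ht : t ∈ τ.1 α₀) (β : O1) :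
    lvl (bFun τ α₀ t β) = (β : Ordinal) := by
  rcases lt_trichotomy α₀ β with h | h | h
  · exact (τ.2.1 β _ (bFun_mem hmono htree τ α₀ hplat ht (le_of_lt h))).2
  · rw [← h, bFun_self]
    exact (τ.2.1 α₀ t ht).2
  · rw [bFun, if_neg (asymm h), if_pos h]
    have hex : ∃ u, u < t ∧ lvl u = (β : Ordinal) := by
      refine onb_pred (τ.2.1 α₀ t ht).1 ?_ β.2
      rw [(τ.2.1 α₀ t ht).2]
      exact Subtype.coe_lt_coe.2 h
    exact (predAt_spec lvl hex).2

include hmono htree hplat in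
theorem bFun_strictMono {t : T} (ht : t ∈ τ.1 α₀) : StrictMono (bFun τ α₀ t) := by
  have honb : OnB lvl t := (τ.2.1 α₀ t ht).1
  have hlt : lvl t = (α₀ : Ordinal) := (τ.2.1 α₀ t ht).2
  have hlow : ∀ β : O1, β < α₀ → bFun τ α₀ t β < t := by
    intro β hβ
    rw [bFun, if_neg (asymm hβ), if_pos hβ]
    have hex : ∃ u, u < t ∧ lvl u = (β : Ordinal) := by
      refine onb_pred honb ?_ β.2
      rw [hlt]; exact Subtype.coe_lt_coe.2 hβ
    exact (predAt_spec lvl hex).1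
  have hhigh : ∀ β : O1, α₀ < β → t < bFun τ α₀ t β := by
    intro β hβ
    rw [bFun, if_pos hβ]
    obtain ⟨hv, hp⟩ := cfun_spec hmono htree τ α₀ hplat ht hβ
    obtain ⟨hex, -, -, -⟩ := claimA hmono htree τ hβ (hplat β (le_of_lt hβ)).symm
    have := predAt_spec lvl (hex _ hv)
    rw [hp] at this
    exact this.1
  intro β β' hββ'
  rcases lt_trichotomy α₀ β with h | h | h
  · -- α₀ < β < β' : chain lemma
    have h' : α₀ < β' := lt_trans h hββ'
    rw [bFun, if_pos h, bFun, if_pos h']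
    obtain ⟨hchain, hv', hv⟩ := cfun_chain hmono htree τ α₀ hplat ht h hββ'
    obtain ⟨hex, -, -, -⟩ :=
      claimA hmono htree τ hββ' (hcard_pair τ α₀ hplat (le_of_lt h) (le_of_lt h'))
    have := predAt_spec lvl (hex _ hv')
    rw [hchain] at this
    exact this.1
  · -- β = α₀ < β'
    have h' : α₀ < β' := h ▸ hββ'
    rw [← h, bFun_self]
    exact hhigh β' h'
  · -- β < α₀
    rcases lt_trichotomy β' α₀ with h2 | h2 | h2
    · -- both below: predecessors of t
      have hb := hlow β (lt_trans hββ' h2)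
      have hb' := hlow β' h2
      have hlb : lvl (bFun τ α₀ t β) = (β : Ordinal) := bFun_lvl hmono htree τ α₀ hplat ht β
      have hlb' : lvl (bFun τ α₀ t β') = (β' : Ordinal) := bFun_lvl hmono htree τ α₀ hplat ht β'
      rcases htree _ _ t hb hb' with hc | hc
      · rcases lt_or_eq_of_le hc with hc' | hc'
        · exact hc'
        · exfalso
          have : ((β : Ordinal)) = (β' : Ordinal) := by rw [← hlb, ← hlb', hc']
          exact ne_of_lt hββ' (Subtype.ext this)
      · exfalso
        rcases lt_or_eq_of_le hc with hc' | hc'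
        · have := hmono hc'
          rw [hlb, hlb'] at this
          exact absurd (Subtype.mk_lt_mk.2 this) (asymm (by exact_mod_cast hββ'))
        · have : ((β' : Ordinal)) = (β : Ordinal) := by rw [← hlb, ← hlb', hc']
          exact ne_of_lt hββ' (Subtype.ext this.symm)
    · -- β < α₀ = β'
      rw [h2] at hββ' ⊢
      rw [bFun_self]
      exact hlow β hββ'
    · -- β < α₀ < β'
      exact lt_trans (hlow β h) (hhigh β' h2)

/-- the branch through `t ∈ τ α₀` -/
def mkBranch {t : T} (ht : t ∈ τ.1 α₀) : Branch lvl :=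
  ⟨bFun τ α₀ t, bFun_strictMono hmono htree τ α₀ hplat ht,
    fun β => bFun_lvl hmono htree τ α₀ hplat ht β⟩

end WithPlateau
end Decompose

section Decompose2
variable {lvl : T → Ordinal}
variable (hmono : StrictMono lvl)
  (htree : ∀ x y z : T, x < z → y < z → x ≤ y ∨ y ≤ x)

theorem card_attach_filter {γ : Type} (s : Finset γ) (p : γ → Prop) :
    ((s.attach).filter (fun x => p x.1)).card = (s.filter p).card := by
  classical
  refine Finset.card_bij (fun a _ => a.1) ?_ ?_ ?_
  · intro a ha
    obtain ⟨ha1, ha2⟩ := Finset.mem_filter.1 ha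
    exact Finset.mem_filter.2 ⟨a.2, ha2⟩
  · intro a _ b _ hab
    exact Subtype.ext hab
  · intro b hb
    obtain ⟨hb1, hb2⟩ := Finset.mem_filter.1 hb
    exact ⟨⟨b, hb1⟩, Finset.mem_filter.2 ⟨Finset.mem_attach _ _, hb2⟩, rfl⟩

include hmono htree in
theorem coh_decomp (τ : Coh lvl) :
    ∃ S : Finset (Branch lvl), ∀ (β : O1) (u : T),
      (u ∈ τ.1 β ↔ Odd ((S.filter (fun b => b.1 β = u)).card)) := by
  classical
  obtain ⟨α₀, hplat⟩ := coh_plateau hmono htree τ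
  refine ⟨(τ.1 α₀).attach.image (fun t => mkBranch hmono htree τ α₀ hplat t.2), fun β u => ?_⟩
  have hIJ : Set.InjOn (fun t : {x // x ∈ τ.1 α₀} => mkBranch hmono htree τ α₀ hplat t.2)
      ((τ.1 α₀).attach : Finset {x // x ∈ τ.1 α₀}) := by
    intro a _ b _ hab
    have h2 : bFun τ α₀ a.1 α₀ = bFun τ α₀ b.1 α₀ :=
      congrArg (fun f : Branch lvl => f.1 α₀) hab
    rw [bFun_self, bFun_self] at h2
    exact Subtype.ext h2
  have hcount : (((τ.1 α₀).attach.image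
        (fun t => mkBranch hmono htree τ α₀ hplat t.2)).filter (fun b => b.1 β = u)).card
      = ((τ.1 α₀).filter (fun t => bFun τ α₀ t β = u)).card := by
    rw [Finset.filter_image]
    rw [Finset.card_image_of_injOn
      (hIJ.mono (Finset.coe_subset.2 (Finset.filter_subset _ _)))]
    exact card_attach_filter (τ.1 α₀) (fun t => bFun τ α₀ t β = u)
  rw [hcount]
  rcases lt_trichotomy α₀ β with h | h | h
  · -- above the plateau level
    by_cases hu : u ∈ τ.1 β
    · obtain ⟨hex, hmem, -, -⟩ := claimA hmono htree τ h (hplat β (le_of_lt h)).symm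
      have ht₀ : predAt lvl (α₀ : Ordinal) u ∈ τ.1 α₀ := hmem u hu
      have hfilter : (τ.1 α₀).filter (fun t => bFun τ α₀ t β = u)
          = {predAt lvl (α₀ : Ordinal) u} := by
        ext t
        rw [Finset.mem_filter, Finset.mem_singleton]
        constructor
        · rintro ⟨ht, hbt⟩
          rw [bFun, if_pos h] at hbt
          rw [← hbt]
          exact ((cfun_spec hmono htree τ α₀ hplat ht h).2).symm
        · rintro rfl
          refine ⟨ht₀, ?_⟩
          rw [bFun, if_pos h]
          exact cfun_eq hmono htree τ α₀ hplat ht₀ h hu rfl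
      rw [hfilter, Finset.card_singleton]
      simp [hu]
    · have hfilter : (τ.1 α₀).filter (fun t => bFun τ α₀ t β = u) = ∅ := by
        rw [Finset.filter_eq_empty_iff]
        intro t ht hbt
        rw [bFun, if_pos h] at hbt
        exact hu (hbt ▸ (cfun_spec hmono htree τ α₀ hplat ht h).1)
      rw [hfilter, Finset.card_empty]
      simp [hu]
  · -- at the plateau level
    subst h
    have hfc : (τ.1 α₀).filter (fun t => bFun τ α₀ t α₀ = u)
        = (τ.1 α₀).filter (fun t => t = u) := by
      apply Finset.filter_congr
      intro t _
      rw [bFun_self]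
    rw [hfc]
    by_cases hu : u ∈ τ.1 α₀
    · have hsing : (τ.1 α₀).filter (fun t => t = u) = {u} := by
        ext x
        simp only [Finset.mem_filter, Finset.mem_singleton]
        exact ⟨fun h => h.2, fun h => ⟨h ▸ hu, h⟩⟩
      rw [hsing, Finset.card_singleton]
      simp [hu]
    · have hemp : (τ.1 α₀).filter (fun t => t = u) = ∅ :=
        Finset.filter_eq_empty_iff.2 (fun {x} hx hxx => hu (hxx ▸ hx))
      rw [hemp, Finset.card_empty]
      simp [hu]
  · -- below the plateau level
    by_cases hlvl : lvl u = (β : Ordinal)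
    · have hco : τ.1 β = Qset lvl (β : Ordinal) (τ.1 α₀) := τ.2.2 β α₀ h
      rw [hco, mem_Qset lvl hmono htree]
      have hfc : (τ.1 α₀).filter (fun t => bFun τ α₀ t β = u)
          = (τ.1 α₀).filter (fun t => u < t) := by
        apply Finset.filter_congr
        intro t ht
        rw [bFun, if_neg (asymm h), if_pos h]
        have hex : ∃ w, w < t ∧ lvl w = (β : Ordinal) := by
          refine onb_pred (τ.2.1 α₀ t ht).1 ?_ β.2
          rw [(τ.2.1 α₀ t ht).2]
          exact Subtype.coe_lt_coe.2 h
        constructor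
        · intro hp
          have := (predAt_spec lvl hex).1
          rwa [hp] at this
        · intro hp
          exact predAt_eq lvl hmono htree hp hlvl
      rw [hfc]
      simp [hlvl]
    · have h1 : u ∉ τ.1 β := fun hu => hlvl ((τ.2.1 β u hu).2)
      have hfilter : (τ.1 α₀).filter (fun t => bFun τ α₀ t β = u) = ∅ := by
        rw [Finset.filter_eq_empty_iff]
        intro t ht hbt
        exact hlvl (hbt ▸ bFun_lvl hmono htree τ α₀ hplat ht β)
      rw [hfilter, Finset.card_empty]
      simp [h1]

/-- the coherent sequence attached to a branch -/
def branchToCoh (hmono : StrictMono lvl)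
    (htree : ∀ x y z : T, x < z → y < z → x ≤ y ∨ y ≤ x) (b : Branch lvl) : Coh lvl :=
  ⟨fun α => ({b.1 α} : Finset T), branch_coh hmono htree b⟩

theorem branchToCoh_inj : Function.Injective (branchToCoh hmono htree) := by
  intro b b' h
  apply Subtype.ext
  funext α
  have h2 : ({b.1 α} : Finset T) = {b'.1 α} :=
    congrFun (congrArg Subtype.val h) α
  exact Finset.singleton_injective h2

include hmono htree in
theorem coh_emb : ∃ f : Coh lvl → Finset (Branch lvl), Function.Injective f := by
  classical
  refine ⟨fun τ => (coh_decomp hmono htree τ).choose, ?_⟩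
  intro τ τ' h
  have h1 := (coh_decomp hmono htree τ).choose_spec
  have h2 := (coh_decomp hmono htree τ').choose_spec
  have h' : (coh_decomp hmono htree τ).choose = (coh_decomp hmono htree τ').choose := h
  apply Subtype.ext
  funext β
  ext u
  rw [h1 β u, h', ← h2 β u]

end Decompose2

section Final
variable {lvl : T → Ordinal}

instance O1inf : Infinite O1 := by
  refine Infinite.of_injective (fun n : ℕ => (⟨(n : Ordinal), ?_⟩ : O1)) ?_
  · calc (n : Ordinal) < Ordinal.omega0 := Ordinal.nat_lt_omega0 n
      _ = Cardinal.aleph0.ord := Cardinal.ord_aleph0.symm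
      _ ≤ om1 := Cardinal.ord_le_ord.2 (Cardinal.aleph0_le_aleph 1)
  · intro m n h
    have : ((m : Ordinal)) = (n : Ordinal) := congrArg Subtype.val h
    exact_mod_cast this

theorem mk_O1 : #O1 = Cardinal.lift.{1, 0} (Cardinal.aleph 1) := by
  have h := Ordinal.mk_Iio_ordinal om1
  rw [Cardinal.card_ord] at h
  exact h

variable (hmono : StrictMono lvl)
  (htree : ∀ x y z : T, x < z → y < z → x ≤ y ∨ y ≤ x)
  (hheight : ∀ t, lvl t < om1)
  (hlevcard : ∀ α : Ordinal, #{t : T // lvl t = α} ≤ Cardinal.aleph 1)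

include hheight hlevcard in
theorem mk_T_le (b0 : Branch lvl) : #T ≤ Cardinal.aleph 1 := by
  classical
  set W : Type := (Cardinal.aleph 1 : Cardinal.{0}).out with hW
  have hWmk : #W = Cardinal.aleph 1 := Cardinal.mk_out _
  have hg : ∀ α : Ordinal, Nonempty ({t : T // lvl t = α} ↪ W) := by
    intro α
    rw [← Cardinal.le_def, hWmk]
    exact hlevcard α
  have g : ∀ α : Ordinal, ({t : T // lvl t = α} ↪ W) := fun α => (hg α).some
  have haux : ∀ {a b : Ordinal} (h : a = b) (x : {t : T // lvl t = a}),
      g b ⟨x.1, x.2.trans h⟩ = g a x := by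
    rintro a b rfl x
    rfl
  have hemb : Function.Injective (fun t : T => ((⟨lvl t, hheight t⟩, g (lvl t) ⟨t, rfl⟩) :
      O1 × W)) := by
    intro t t' h
    have h1 : (⟨lvl t, hheight t⟩ : O1) = ⟨lvl t', hheight t'⟩ := congrArg Prod.fst h
    have hl : lvl t = lvl t' := congrArg Subtype.val h1
    have h2 : g (lvl t) ⟨t, rfl⟩ = g (lvl t') ⟨t', rfl⟩ := congrArg Prod.snd h
    have h3 : g (lvl t') ⟨t, hl⟩ = g (lvl t') ⟨t', rfl⟩ := by
      rw [← h2, ← haux hl ⟨t, rfl⟩]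
    have := (g (lvl t')).injective h3
    exact congrArg Subtype.val this
  have hle : Cardinal.lift.{1} #T ≤ Cardinal.lift.{0} #(O1 × W) :=
    Cardinal.lift_mk_le'.2 ⟨⟨_, hemb⟩⟩
  rw [Cardinal.lift_uzero, Cardinal.mk_prod, Cardinal.lift_uzero, mk_O1, hWmk] at hle
  rw [← Cardinal.lift_mul, Cardinal.mul_eq_self (Cardinal.aleph0_le_aleph 1)] at hle
  exact Cardinal.lift_le.1 hle

include hmono in
theorem T_infinite (b0 : Branch lvl) : Infinite T :=
  Infinite.of_injective b0.1 (b0.2.1).injective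

include hmono hheight hlevcard in
theorem mk_Mdl (b0 : Branch lvl) : #(Mdl lvl) = Cardinal.aleph 1 := by
  classical
  haveI : Infinite T := T_infinite hmono b0
  refine le_antisymm ?_ ?_
  · -- |M| ≤ ℵ₁
    have h1 : #(Mdl lvl) ≤ #(Pre lvl) := Cardinal.mk_quotient_le
    have h2 : #(Pre lvl) ≤ #(T × Finset T) := Cardinal.mk_subtype_le _
    have h3 : #(T × Finset T) = #T * #(Finset T) := by
      rw [Cardinal.mk_prod, Cardinal.lift_uzero, Cardinal.lift_uzero]
    have h4 : #(Finset T) = #T := Cardinal.mk_finset_of_infinite T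
    have h5 : #T ≤ Cardinal.aleph 1 := mk_T_le hheight hlevcard b0
    calc #(Mdl lvl) ≤ #T * #(Finset T) := le_trans h1 (le_trans h2 (le_of_eq h3))
      _ = #T * #T := by rw [h4]
      _ ≤ Cardinal.aleph 1 * Cardinal.aleph 1 := mul_le_mul' h5 h5
      _ = Cardinal.aleph 1 := Cardinal.mul_eq_self (Cardinal.aleph0_le_aleph 1)
  · -- ℵ₁ ≤ |M|
    have hemb : Function.Injective (fun α : O1 => zeroM b0 α) := by
      intro α α' h
      have h1 : Mlvl (zeroM b0 α) = Mlvl (zeroM b0 α') := congrArg Mlvl h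
      have h2 : ((α : Ordinal)) = (α' : Ordinal) := by
        rw [← b0.2.2 α, ← b0.2.2 α']
        exact h1
      exact Subtype.ext h2
    have hle : Cardinal.lift.{0} #O1 ≤ Cardinal.lift.{1} #(Mdl lvl) :=
      Cardinal.lift_mk_le'.2 ⟨⟨_, hemb⟩⟩
    rw [Cardinal.lift_uzero, mk_O1] at hle
    exact Cardinal.lift_le.1 hle

end Final

end ShelahAut


open ShelahAut in
/-- Suppose `T` is a tree of height ω₁ (partial order with linearly ordered sets of
predecessors and a strictly monotone level function `lvl` taking values `< ω₁`), all of
whose levels have at most ω₁ nodes, and `T` has exactly `λ` branches of length ω₁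
(strictly increasing selections of one node from each level), where `ω₁ < λ < 2^ω₁`.
Then there is a first-order structure `M` in a relational vocabulary, of cardinality
ω₁, whose automorphism group has cardinality exactly `λ`. -/
theorem structure_with_lambda_automorphisms
    (T : Type) [PartialOrder T] (lvl : T → Ordinal)
    (hmono : StrictMono lvl)
    (htree : ∀ x y z : T, x < z → y < z → x ≤ y ∨ y ≤ x)
    (hheight : ∀ t, lvl t < om1)
    (hlevels : ∀ α < om1, ∃ t, lvl t = α)
    (hlevcard : ∀ α : Ordinal, #{t : T // lvl t = α} ≤ Cardinal.aleph 1)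
    (lam : Cardinal.{0}) (h1 : Cardinal.aleph 1 < lam) (h2 : lam < 2 ^ Cardinal.aleph 1)
    (hbranch :
      #{b : O1 → T // StrictMono b ∧ ∀ α : O1, lvl (b α) = (α : Ordinal)} =
        Cardinal.lift.{1} lam) :
    ∃ (L : FirstOrder.Language) (M : Type) (_ : L.Structure M),
      L.IsRelational ∧ #M = Cardinal.aleph 1 ∧ #(M ≃[L] M) = lam := by
  classical
  have hbranch' : #(Branch lvl) = Cardinal.lift.{1} lam := hbranch
  have hlam0 : lam ≠ 0 := by
    intro h
    rw [h] at h1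
    exact absurd h1 (by simp)
  have hBne : Nonempty (Branch lvl) := by
    rw [← Cardinal.mk_ne_zero_iff (α := Branch lvl), hbranch']
    simpa using hlam0
  obtain ⟨b0⟩ := hBne
  have hlamInf : Cardinal.aleph0 ≤ lam := (Cardinal.aleph0_le_aleph 1).trans h1.le
  haveI hBinf : Infinite (Branch lvl) := by
    rw [Cardinal.infinite_iff, hbranch', ← Cardinal.lift_aleph0.{1,0}]
    exact Cardinal.lift_le.2 hlamInf
  have hCoh : #(Coh lvl) = Cardinal.lift.{1} lam := by
    refine le_antisymm ?_ ?_
    · obtain ⟨f, hf⟩ := coh_emb hmono htree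
      calc #(Coh lvl) ≤ #(Finset (Branch lvl)) := Cardinal.mk_le_of_injective hf
        _ = #(Branch lvl) := Cardinal.mk_finset_of_infinite _
        _ = Cardinal.lift.{1} lam := hbranch'
    · rw [← hbranch']
      exact Cardinal.mk_le_of_injective (branchToCoh_inj hmono htree)
  have hAut : #(Mdl lvl ≃[Lang T] Mdl lvl) = lam := by
    have hE : Nonempty ((Mdl lvl ≃[Lang T] Mdl lvl) ≃ Coh lvl) :=
      ⟨autEquivCoh hmono htree hheight b0⟩
    have hl := Cardinal.lift_mk_eq'.2 hE
    rw [Cardinal.lift_uzero, hCoh] at hl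
    exact Cardinal.lift_inj.1 hl
  exact ⟨Lang T, Mdl lvl, MdlStructure lvl, inferInstance,
    mk_Mdl hmono hheight hlevcard b0, hAut⟩


end
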